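/- Let 𝔘 be a uniformly integrable set of probability densities in L¹(μ) on a probability space. Then there exists η > 0 such that μ(u > 2η) > 2η for every u ∈ 𝔘. Consequently, for any probability density v with L¹-distance to 𝔘 less than η², one has μ(v > η) > η. -/

import Mathlib

open MeasureTheory Filter Topology Set

/-- For a uniformly integrable set `𝔘` of probability densities there is `η > 0` with
`μ(u > 2η) > 2η` for all `u ∈ 𝔘`; consequently `μ(v > η) > η` for every probability density
`v` whose `L¹` distance to `𝔘` is less than `η²`. -/
theorem stmt13 {X : Type*} [MeasurableSpace X] (μ : Measure X) [IsProbabilityMeasure μ]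
    (U : Set (X → ℝ))
    (hdens : ∀ u ∈ U, Measurable u ∧ 0 ≤ u ∧ Integrable u μ ∧ ∫ x, u x ∂μ = 1)
    (hui : ∀ ε > (0 : ℝ), ∃ M : ℝ, ∀ u ∈ U, ∫ x in {x | M < u x}, u x ∂μ < ε) :
    ∃ η > (0 : ℝ),
      (∀ u ∈ U, 2 * η < (μ {x | 2 * η < u x}).toReal) ∧
      ∀ v : X → ℝ, Measurable v → 0 ≤ v → Integrable v μ → ∫ x, v x ∂μ = 1 →
        (∃ u ∈ U, ∫ x, |u x - v x| ∂μ < η ^ 2) →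
        η < (μ {x | η < v x}).toReal := by
  obtain ⟨M, hM⟩ := hui (1/2) (by norm_num)
  set M' : ℝ := max M 1 with hM'def
  have hM1 : (1:ℝ) ≤ M' := le_max_right _ _
  have hM0 : (0:ℝ) < M' := lt_of_lt_of_le one_pos hM1
  set η : ℝ := 1 / (16 * M') with hη
  have hη0 : 0 < η := by positivity
  have key : ∀ u ∈ U, 2 * η < (μ {x | 2 * η < u x}).toReal := by
    intro u hu
    obtain ⟨hm, hnn, hint, htot⟩ := hdens u hu
    set A : Set X := {x | M' < u x}ᶜ with hAdef
    set s : Set X := {x | 2 * η < u x} with hsdef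
    have hsm : MeasurableSet s := measurableSet_lt measurable_const hm
    have hAm : MeasurableSet A := (measurableSet_lt measurable_const hm).compl
    -- tail is small
    have htail : ∫ x in {x | M' < u x}, u x ∂μ < 1/2 := by
      refine lt_of_le_of_lt ?_ (hM u hu)
      refine setIntegral_mono_set hint.integrableOn
        (Filter.Eventually.of_forall fun x => hnn x) ?_
      exact Filter.Eventually.of_forall fun x hx =>
        lt_of_le_of_lt (le_max_left M 1) hx
    have hsplit : ∫ x in {x | M' < u x}, u x ∂μ + ∫ x in A, u x ∂μ = 1 := by
      rw [integral_add_compl (measurableSet_lt measurable_const hm) hint, htot]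
    have hAbig : (1:ℝ)/2 < ∫ x in A, u x ∂μ := by linarith
    -- A ⊆ (A ∩ s) ∪ sᶜ
    have hsub : A ⊆ (A ∩ s) ∪ sᶜ := by
      intro x hx
      by_cases h : x ∈ s
      · exact Or.inl ⟨hx, h⟩
      · exact Or.inr h
    have hmono : ∫ x in A, u x ∂μ ≤ ∫ x in (A ∩ s) ∪ sᶜ, u x ∂μ :=
      setIntegral_mono_set hint.integrableOn
        (Filter.Eventually.of_forall fun x => hnn x)
        (Filter.Eventually.of_forall hsub)
    have hdisj : Disjoint (A ∩ s) sᶜ :=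
      Disjoint.mono_left inter_subset_right disjoint_compl_right
    have hunion : ∫ x in (A ∩ s) ∪ sᶜ, u x ∂μ
        = ∫ x in A ∩ s, u x ∂μ + ∫ x in sᶜ, u x ∂μ :=
      setIntegral_union hdisj hsm.compl hint.integrableOn hint.integrableOn
    have h1 : ∫ x in A ∩ s, u x ∂μ ≤ M' * (μ s).toReal := by
      have hb : ‖∫ x in A ∩ s, u x ∂μ‖ ≤ M' * (μ (A ∩ s)).toReal := by
        refine norm_setIntegral_le_of_norm_le_const (measure_lt_top μ _)
          fun x hx => ?_
        rw [Real.norm_eq_abs, abs_of_nonneg (hnn x)]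
        exact le_of_not_gt hx.1
      have hμ : (μ (A ∩ s)).toReal ≤ (μ s).toReal :=
        ENNReal.toReal_mono (measure_ne_top μ s) (measure_mono inter_subset_right)
      calc ∫ x in A ∩ s, u x ∂μ ≤ ‖∫ x in A ∩ s, u x ∂μ‖ := le_abs_self _
        _ ≤ M' * (μ (A ∩ s)).toReal := hb
        _ ≤ M' * (μ s).toReal := by
            exact mul_le_mul_of_nonneg_left hμ hM0.le
    have h2 : ∫ x in sᶜ, u x ∂μ ≤ 2 * η := by
      have hb : ‖∫ x in sᶜ, u x ∂μ‖ ≤ (2 * η) * (μ sᶜ).toReal := by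
        refine norm_setIntegral_le_of_norm_le_const (measure_lt_top μ _)
          fun x hx => ?_
        rw [Real.norm_eq_abs, abs_of_nonneg (hnn x)]
        exact le_of_not_gt hx
      have hμ1 : (μ sᶜ).toReal ≤ 1 := by
        have := prob_le_one (μ := μ) (s := sᶜ)
        simpa using ENNReal.toReal_mono ENNReal.one_ne_top this
      calc ∫ x in sᶜ, u x ∂μ ≤ ‖∫ x in sᶜ, u x ∂μ‖ := le_abs_self _
        _ ≤ (2 * η) * (μ sᶜ).toReal := hb
        _ ≤ 2 * η := by nlinarith
    have hmain : (1:ℝ)/2 < M' * (μ s).toReal + 2 * η := by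
      have := hmono
      rw [hunion] at this
      linarith
    have h8 : M' * (2 * η) = 1/8 := by
      rw [hη]; field_simp; ring
    set t : ℝ := (μ s).toReal with htdef
    nlinarith [mul_pos hM0 hη0]
  refine ⟨η, hη0, key, ?_⟩
  rintro v hvm hvnn hvint hvtot ⟨u, hu, hclose⟩
  obtain ⟨hm, hnn, hint, htot⟩ := hdens u hu
  have hu2 := key u hu
  -- Markov's inequality
  have hmarkov : η * (μ {x | η ≤ |u x - v x|}).toReal ≤ ∫ x, |u x - v x| ∂μ :=
    mul_meas_ge_le_integral_of_nonneg
      (Filter.Eventually.of_forall fun x => abs_nonneg _)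
      (hint.sub hvint).abs η
  have hmsm : (μ {x | η ≤ |u x - v x|}).toReal < η := by
    have hlt : η * (μ {x | η ≤ |u x - v x|}).toReal < η * η := by
      calc η * (μ {x | η ≤ |u x - v x|}).toReal ≤ ∫ x, |u x - v x| ∂μ := hmarkov
        _ < η ^ 2 := hclose
        _ = η * η := sq η
    exact lt_of_mul_lt_mul_left hlt hη0.le
  have hsub : {x | 2 * η < u x} ⊆ {x | η < v x} ∪ {x | η ≤ |u x - v x|} := by
    intro x hx
    by_cases h : η < v x
    · exact Or.inl h
    · push_neg at h
      right
      have hx' : 2 * η < u x := hx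
      have := le_abs_self (u x - v x)
      simp only [mem_setOf_eq]
      linarith
  have hmeas : (μ {x | 2 * η < u x}).toReal
      ≤ (μ {x | η < v x}).toReal + (μ {x | η ≤ |u x - v x|}).toReal := by
    rw [← ENNReal.toReal_add (measure_ne_top _ _) (measure_ne_top _ _)]
    refine ENNReal.toReal_mono ?_ ?_
    · exact ENNReal.add_ne_top.2 ⟨measure_ne_top _ _, measure_ne_top _ _⟩
    · exact (measure_mono hsub).trans (measure_union_le _ _)
  linarith
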